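/- arXiv:1606.02568 — 5 statements merged into one kernel-verified Lean document; each statement's English description precedes it below -/
import Mathlib

section
/- Let N ≥ 1 be an integer and let n ≥ 4 be an even integer. Suppose c_0, c_1, …, c_{Nn} are integers such that (e_N)^n = Σ_{k=0}^{Nn} c_k · e_k in ℤ[X]. Then c_{Nn} = 1 and c_{Nn−2} = n − 1. -/
open Polynomial

/-- Renormalized Chebyshev polynomials of the second kind:
`e 0 = 1`, `e 1 = X`, `e (l+2) = X * e (l+1) - e l`. -/
noncomputable def e : ℕ → Polynomial ℤ
  | 0 => 1
  | 1 => X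
  | (l + 2) => X * e (l + 1) - e l

lemma e_basic : ∀ l, (e l).Monic ∧ (e l).natDegree = l := by
  have key : ∀ l, ((e l).Monic ∧ (e l).natDegree = l) ∧
      ((e (l+1)).Monic ∧ (e (l+1)).natDegree = l + 1) := by
    intro l
    induction l with
    | zero => exact ⟨⟨monic_one, natDegree_one⟩, ⟨monic_X, natDegree_X⟩⟩
    | succ k ih =>
      refine ⟨ih.2, ?_, ?_⟩
      · show (X * e (k+1) - e k).Monic
        have hm : (X * e (k+1)).Monic := monic_X.mul ih.2.1
        refine hm.sub_of_left ?_
        have hd : (X * e (k+1)).natDegree = k + 2 := by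
          rw [natDegree_X_mul ih.2.1.ne_zero, ih.2.2]
        exact degree_lt_degree (by rw [ih.1.2, hd]; omega)
      · show (X * e (k+1) - e k).natDegree = k + 2
        have hd : (X * e (k+1)).natDegree = k + 2 := by
          rw [natDegree_X_mul ih.2.1.ne_zero, ih.2.2]
        rw [natDegree_sub_eq_left_of_natDegree_lt, hd]
        rw [ih.1.2, hd]; omega
  exact fun l => (key l).1

lemma e_monic (l : ℕ) : (e l).Monic := (e_basic l).1
lemma e_deg (l : ℕ) : (e l).natDegree = l := (e_basic l).2

lemma e_coeff_top (l : ℕ) : (e l).coeff l = 1 := by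
  have := (e_monic l).coeff_natDegree
  rwa [e_deg] at this

lemma e_coeff_hi {l d : ℕ} (h : l < d) : (e l).coeff d = 0 :=
  coeff_eq_zero_of_natDegree_lt (by rw [e_deg]; exact h)

lemma e_coeff_sub1 : ∀ l, (e (l+1)).coeff l = 0 := by
  intro l
  induction l with
  | zero => simp [e]
  | succ k ih =>
    have he : e (k+2) = X * e (k+1) - e k := rfl
    rw [he, coeff_sub, coeff_X_mul, ih, e_coeff_hi (by omega)]
    ring

lemma e_coeff_sub2 : ∀ l, (e (l+2)).coeff l = -((l : ℤ)+1) := by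
  intro l
  induction l with
  | zero =>
    have he : e 2 = X * e 1 - e 0 := rfl
    rw [he]; simp [e]
  | succ k ih =>
    have he : e (k+3) = X * e (k+2) - e (k+1) := rfl
    rw [he, coeff_sub, coeff_X_mul, ih, e_coeff_top]
    push_cast; ring

lemma mul_sub1 {p q : Polynomial ℤ} {a b : ℕ} (hp : p.Monic) (hq : q.Monic)
    (hpa : p.natDegree = a+1) (hqb : q.natDegree = b+1)
    (hp0 : p.coeff a = 0) (hq0 : q.coeff b = 0) :
    (p*q).coeff (a+b+1) = 0 := by
  rw [coeff_mul, Finset.Nat.sum_antidiagonal_eq_sum_range_succ_mk]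
  apply Finset.sum_eq_zero
  intro k hk
  simp only [Finset.mem_range] at hk
  rcases lt_trichotomy k a with h|h|h
  · have : q.coeff (a+b+1-k) = 0 := coeff_eq_zero_of_natDegree_lt (by rw [hqb]; omega)
    rw [this, mul_zero]
  · rw [h, hp0, zero_mul]
  · rcases eq_or_lt_of_le (Nat.succ_le_of_lt h) with h'|h'
    · rw [← h', show a+b+1-(a+1) = b from by omega, hq0, mul_zero]
    · have : p.coeff k = 0 := coeff_eq_zero_of_natDegree_lt (by rw [hpa]; omega)
      rw [this, zero_mul]

lemma mul_sub2 {p q : Polynomial ℤ} {a b : ℕ} (hp : p.Monic) (hq : q.Monic)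
    (hpa : p.natDegree = a+1) (hqb : q.natDegree = b+1)
    (hp0 : p.coeff a = 0) (hq0 : q.coeff b = 0) :
    (p*q).coeff (a+b) = p.coeff (a-1) + q.coeff (b-1) := by
  have hpt : p.coeff (a+1) = 1 := by rw [← hpa]; exact hp.coeff_natDegree
  have hqt : q.coeff (b+1) = 1 := by rw [← hqb]; exact hq.coeff_natDegree
  rw [coeff_mul, Finset.Nat.sum_antidiagonal_eq_sum_range_succ_mk]
  rcases Nat.eq_zero_or_pos a with ha | ha
  · subst ha
    rcases Nat.eq_zero_or_pos b with hb | hb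
    · subst hb
      simp [hp0, hq0]
    · rw [Finset.sum_eq_single_of_mem 1 (by simp; omega)]
      · simp only [hpt, one_mul, Nat.sub_zero]
        rw [show (0:ℕ) - 1 = 0 from rfl, hp0]
        ring
      · intro k hk hne
        simp only [Finset.mem_range] at hk
        rcases Nat.eq_zero_or_pos k with h0 | h0
        · rw [h0, hp0, zero_mul]
        · have : p.coeff k = 0 := coeff_eq_zero_of_natDegree_lt (by rw [hpa]; omega)
          rw [this, zero_mul]
  · rcases Nat.eq_zero_or_pos b with hb | hb
    · subst hb
      rw [Finset.sum_eq_single_of_mem (a-1) (by simp)]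
      · rw [show a + 0 - (a-1) = 1 from by omega, hqt, mul_one,
          show (0:ℕ) - 1 = 0 from rfl, hq0, add_zero]
      · intro k hk hne
        simp only [Finset.mem_range] at hk
        rcases lt_trichotomy k (a-1) with h|h|h
        · have : q.coeff (a+0-k) = 0 := coeff_eq_zero_of_natDegree_lt (by rw [hqb]; omega)
          rw [this, mul_zero]
        · omega
        · have hka : k = a := by omega
          rw [hka, hp0, zero_mul]
    · -- generic case: two nonzero terms, k = a-1 and k = a+1
      have hmem : a + 1 ∈ Finset.range (a+b+1) := by simp; omega
      rw [← Finset.add_sum_erase _ _ hmem]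
      rw [Finset.sum_eq_single_of_mem (a-1)
        (Finset.mem_erase.mpr ⟨by omega, by simp; omega⟩)]
      · rw [show a+b-(a+1) = b-1 from by omega, hpt, one_mul,
          show a+b-(a-1) = b+1 from by omega, hqt, mul_one, add_comm]
      · intro k hk hne
        have hk1 : k ≠ a + 1 := (Finset.mem_erase.mp hk).1
        have hkr : k < a+b+1 := Finset.mem_range.mp (Finset.mem_erase.mp hk).2
        rcases lt_trichotomy k (a-1) with h|h|h
        · have : q.coeff (a+b-k) = 0 := coeff_eq_zero_of_natDegree_lt (by rw [hqb]; omega)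
          rw [this, mul_zero]
        · omega
        · rcases eq_or_lt_of_le (show a ≤ k from by omega) with h'|h'
          · rw [← h', hp0, zero_mul]
          · have : p.coeff k = 0 := coeff_eq_zero_of_natDegree_lt (by rw [hpa]; omega)
            rw [this, zero_mul]

lemma eN_sub1 (N : ℕ) (hN : 1 ≤ N) : (e N).coeff (N-1) = 0 := by
  obtain ⟨l, rfl⟩ : ∃ l, N = l + 1 := ⟨N-1, by omega⟩
  simpa using e_coeff_sub1 l

lemma eN_sub2 (N : ℕ) (hN : 1 ≤ N) : (e N).coeff (N-2) = -((N:ℤ) - 1) := by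
  rcases Nat.lt_or_ge N 2 with h | h
  · have : N = 1 := by omega
    subst this
    show (X : Polynomial ℤ).coeff 0 = _
    simp
  · obtain ⟨l, rfl⟩ : ∃ l, N = l + 2 := ⟨N-2, by omega⟩
    have := e_coeff_sub2 l
    rw [show l + 2 - 2 = l from by omega, this]
    push_cast; ring

lemma pow_coeffs (N : ℕ) (hN : 1 ≤ N) : ∀ m, 1 ≤ m →
    (e N ^ m).Monic ∧ (e N ^ m).natDegree = N*m ∧ (e N ^ m).coeff (N*m - 1) = 0 ∧
    (e N ^ m).coeff (N*m - 2) = -(m : ℤ) * ((N : ℤ) - 1) := by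
  intro m
  induction m with
  | zero => omega
  | succ k ih =>
    intro _
    rcases Nat.eq_zero_or_pos k with hk | hk
    · subst hk
      rw [pow_one]
      have h1 : N * (0+1) = N := by ring
      refine ⟨e_monic N, by rw [e_deg, h1], ?_, ?_⟩
      · rw [h1]; exact eN_sub1 N hN
      · rw [h1, eN_sub2 N hN]; push_cast; ring
    · obtain ⟨hmon, hdeg, hs1, hs2⟩ := ih hk
      have hNk : 1 ≤ N * k := Nat.one_le_iff_ne_zero.mpr (by positivity)
      have hE : N*(k+1) = N*k + N := by ring
      have hpa : (e N ^ k).natDegree = (N*k - 1) + 1 := by rw [hdeg]; omega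
      have hqb : (e N).natDegree = (N-1) + 1 := by rw [e_deg]; omega
      have hp0 : (e N ^ k).coeff (N*k - 1) = 0 := hs1
      have hq0 : (e N).coeff (N-1) = 0 := eN_sub1 N hN
      have hmul : e N ^ (k+1) = e N ^ k * e N := pow_succ _ _
      have key1 := mul_sub1 hmon (e_monic N) hpa hqb hp0 hq0
      have key2 := mul_sub2 hmon (e_monic N) hpa hqb hp0 hq0
      refine ⟨by rw [hmul]; exact hmon.mul (e_monic N), ?_, ?_, ?_⟩
      · rw [hmul, natDegree_mul hmon.ne_zero (e_monic N).ne_zero, hdeg, e_deg]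
        ring
      · rw [hmul, show N*(k+1) - 1 = (N*k-1) + (N-1) + 1 from by omega]
        exact key1
      · rw [hmul, show N*(k+1) - 2 = (N*k-1) + (N-1) from by omega, key2,
          show N*k-1-1 = N*k-2 from by omega, hs2,
          show N-1-1 = N-2 from by omega, eN_sub2 N hN]
        push_cast
        ring

theorem coeff_top_of_pow_expansion (N n : ℕ) (hN : 1 ≤ N) (hn : 4 ≤ n)
    (hne : Even n) (c : ℕ → ℤ)
    (hc : (e N) ^ n = ∑ k ∈ Finset.range (N * n + 1), C (c k) * e k) :
    c (N * n) = 1 ∧ c (N * n - 2) = (n : ℤ) - 1 := by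
  obtain ⟨hmon, hdeg, hs1, hs2⟩ := pow_coeffs N hN n (by omega)
  have hNn : 4 ≤ N * n := le_trans hn (Nat.le_mul_of_pos_left n (by omega))
  -- coefficient extraction at the top degree
  have htop : c (N * n) = 1 := by
    have h1 := congrArg (fun p => p.coeff (N * n)) hc
    simp only [finset_sum_coeff, coeff_C_mul] at h1
    rw [Finset.sum_eq_single_of_mem (N * n) (by simp)] at h1
    · rw [e_coeff_top, mul_one] at h1
      have : (e N ^ n).coeff (N*n) = 1 := by
        rw [← hdeg]; exact hmon.coeff_natDegree
      rw [this] at h1; exact h1.symm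
    · intro k hk hne'
      rw [e_coeff_hi (by simp at hk; omega), mul_zero]
  refine ⟨htop, ?_⟩
  -- coefficient extraction at degree N*n - 2
  set d := N * n - 2 with hd
  have hdd : N * n = d + 2 := by omega
  have h2 := congrArg (fun p => p.coeff d) hc
  simp only [finset_sum_coeff, coeff_C_mul] at h2
  have hmem : N * n ∈ Finset.range (N * n + 1) := by simp
  rw [← Finset.add_sum_erase _ _ hmem,
    Finset.sum_eq_single_of_mem d
      (Finset.mem_erase.mpr ⟨by omega, by simp; omega⟩)] at h2
  · rw [e_coeff_top, mul_one, hdd, e_coeff_sub2, hs2] at h2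
    rw [← hdd, htop, one_mul] at h2
    have hcast : ((d : ℤ) + 2) = (N : ℤ) * n := by
      rw [← Nat.cast_ofNat, ← Nat.cast_add, ← hdd]; push_cast; ring
    have : c d = -(n : ℤ) * ((N:ℤ) - 1) + ((d:ℤ) + 1) := by linarith
    rw [this]
    have : (d : ℤ) = (N:ℤ) * n - 2 := by linarith
    rw [this]; ring
  · intro k hk hne'
    have hk1 : k ≠ N * n := (Finset.mem_erase.mp hk).1
    have hkr : k < N * n + 1 := Finset.mem_range.mp (Finset.mem_erase.mp hk).2
    rcases lt_trichotomy k d with h|h|h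
    · rw [e_coeff_hi h, mul_zero]
    · omega
    · have : k = d + 1 := by omega
      rw [this, e_coeff_sub1, mul_zero]
end

section
/- Let n ≥ 4 be an even integer and let q ∈ ℂ satisfy q^n = 1 and q ≠ 1 (so |q| = 1 and the complex conjugate of q is q⁻¹). Let V be a complex vector space equipped with a sesquilinear hermitian form ⟨·,·⟩, and let u_1, …, u_{n−2} ∈ V satisfy: ⟨u_j, u_j⟩ = −i(q − q̄) for all 1 ≤ j ≤ n−2; ⟨u_j, u_{j+1}⟩ = i(1 − q̄) for all 1 ≤ j ≤ n−3; and ⟨u_j, u_k⟩ = 0 whenever |j − k| > 1. Then the vectors u_1, …, u_{n−2} are linearly independent. -/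
open Complex

/-- Extension of coefficients to `ℤ`, zero outside the range. -/
noncomputable def mcmullenCAux (n : ℕ) (g : Fin (n - 2) → ℂ) : ℤ → ℂ :=
  fun j => if h : 0 ≤ j ∧ j < (n - 2 : ℕ) then g ⟨j.toNat, by omega⟩ else 0

theorem mcmullen_spanning_set_linearIndependent (n : ℕ) (hn : 4 ≤ n)
    (hne : Even n) (q : ℂ) (hq : q ^ n = 1) (hq1 : q ≠ 1)
    {V : Type*} [AddCommGroup V] [Module ℂ V]
    (B : V →ₗ[ℂ] V →ₛₗ[starRingEnd ℂ] ℂ)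
    (hherm : ∀ x y : V, B y x = starRingEnd ℂ (B x y))
    (u : Fin (n - 2) → V)
    (hdiag : ∀ j, B (u j) (u j) = -I * (q - starRingEnd ℂ q))
    (hadj : ∀ j k : Fin (n - 2), (j : ℕ) + 1 = (k : ℕ) →
      B (u j) (u k) = I * (1 - starRingEnd ℂ q))
    (hfar : ∀ j k : Fin (n - 2), 1 < ((j : ℤ) - (k : ℤ)).natAbs →
      B (u j) (u k) = 0) :
    LinearIndependent ℂ u := by
  have hq0 : q ≠ 0 := by
    intro h
    rw [h, zero_pow (by omega : n ≠ 0)] at hq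
    exact zero_ne_one hq
  have hnorm : ‖q‖ = 1 := by
    have h1 : ‖q‖ ^ n = 1 := by rw [← norm_pow, hq, norm_one]
    rcases (pow_eq_one_iff_cases.mp h1) with h | h | h
    · omega
    · exact h
    · exfalso
      have h0 := norm_nonneg q
      rw [h.1] at h0
      linarith
  have hconj : starRingEnd ℂ q = q⁻¹ := by
    rw [Complex.inv_def, Complex.normSq_eq_norm_sq, hnorm]
    simp
  have hq1' : (1 : ℂ) - q ≠ 0 := sub_ne_zero.mpr (fun h => hq1 h.symm)
  -- the Gram matrix
  have hM : ∀ j k : Fin (n - 2), B (u j) (u k) =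
      if (j : ℕ) = (k : ℕ) then -I * (q - q⁻¹)
      else if (j : ℕ) + 1 = (k : ℕ) then I * (1 - q⁻¹)
      else if (k : ℕ) + 1 = (j : ℕ) then -I * (1 - q) else 0 := by
    intro j k
    split_ifs with h1 h2 h3
    · have : j = k := Fin.ext h1
      subst this
      rw [hdiag, hconj]
    · rw [hadj j k h2, hconj]
    · rw [hherm, hadj k j h3, hconj, map_mul, map_sub, map_one, Complex.conj_I,
        map_inv₀, hconj, inv_inv]
      try ring
    · apply hfar
      have hj := j.isLt
      have hk := k.isLt
      omega
  rw [Fintype.linearIndependent_iff]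
  intro g hg
  set c : ℤ → ℂ := mcmullenCAux n g with hcdef
  have hcg : ∀ j : Fin (n - 2), c ((j : ℕ) : ℤ) = g j := by
    intro j
    have hj := j.isLt
    simp [hcdef, mcmullenCAux, hj]
  have hc0 : ∀ j : ℤ, (j < 0 ∨ ((n : ℤ) - 2) ≤ j) → c j = 0 := by
    intro j hj
    rw [hcdef, mcmullenCAux, dif_neg]
    push_cast
    omega
  -- pairing the relation with each u k
  have h0 : ∀ k : Fin (n - 2), ∑ j, g j * B (u j) (u k) = 0 := by
    intro k
    have h1 : B (∑ j, g j • u j) (u k) = 0 := by rw [hg]; simp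
    rw [map_sum] at h1
    simpa [LinearMap.sum_apply, map_smul, LinearMap.smul_apply, smul_eq_mul] using h1
  -- evaluating sums of singletons
  have key : ∀ (p : ℕ) (hp : p < n - 2) (f : Fin (n - 2) → ℂ),
      (∑ j : Fin (n - 2), if (j : ℕ) = p then f j else 0) = f ⟨p, hp⟩ := by
    intro p hp f
    rw [Finset.sum_eq_single (⟨p, hp⟩ : Fin (n - 2))]
    · simp
    · intro j _ hj
      rw [if_neg fun h => hj (Fin.ext h)]
    · simp
  -- the three-term recurrence (already multiplied by I)
  have hrec : ∀ k : ℤ, 0 ≤ k → k < (n : ℤ) - 2 →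
      c (k + 1) * (1 - q) = c (k - 1) * (1 - q⁻¹) - c k * (q - q⁻¹) := by
    intro k hk0 hkm
    have hklt : k.toNat < n - 2 := by omega
    set kF : Fin (n - 2) := ⟨k.toNat, hklt⟩ with hkF
    have hkFval : (kF : ℕ) = k.toNat := rfl
    have hs := h0 kF
    have hrw : ∀ j : Fin (n - 2), g j * B (u j) (u kF) =
        (if (j : ℕ) = (kF : ℕ) then g j * (-I * (q - q⁻¹)) else 0) +
        ((if (j : ℕ) + 1 = (kF : ℕ) then g j * (I * (1 - q⁻¹)) else 0) +
         (if (kF : ℕ) + 1 = (j : ℕ) then g j * (-I * (1 - q)) else 0)) := by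
      intro j
      rw [hM j kF]
      split_ifs with h1 h2 h3 h4 h5 h6 h7 <;> first | omega | ring
    rw [Finset.sum_congr rfl (fun j _ => hrw j), Finset.sum_add_distrib,
      Finset.sum_add_distrib] at hs
    have S1 : (∑ j : Fin (n - 2), if (j : ℕ) = (kF : ℕ) then g j * (-I * (q - q⁻¹)) else 0)
        = c k * (-I * (q - q⁻¹)) := by
      rw [key (kF : ℕ) kF.isLt]
      have h1 := hcg kF
      rw [show (((kF : ℕ)) : ℤ) = k by rw [hkFval]; omega] at h1
      rw [h1, show (⟨(kF : ℕ), kF.isLt⟩ : Fin (n - 2)) = kF from Fin.ext rfl]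
    have S2 : (∑ j : Fin (n - 2), if (j : ℕ) + 1 = (kF : ℕ) then g j * (I * (1 - q⁻¹)) else 0)
        = c (k - 1) * (I * (1 - q⁻¹)) := by
      by_cases hk1 : (kF : ℕ) = 0
      · rw [Finset.sum_eq_zero (fun j _ => if_neg (by omega))]
        rw [hc0 (k - 1) (by left; omega)]
        ring
      · have hplt : (kF : ℕ) - 1 < n - 2 := by omega
        have e2 : (∑ j : Fin (n - 2), if (j : ℕ) + 1 = (kF : ℕ) then g j * (I * (1 - q⁻¹)) else 0)
            = ∑ j : Fin (n - 2), if (j : ℕ) = (kF : ℕ) - 1 then g j * (I * (1 - q⁻¹)) else 0 := by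
          apply Finset.sum_congr rfl
          intro j _
          split_ifs with h1 h2 <;> first | rfl | omega
        rw [e2, key ((kF : ℕ) - 1) hplt]
        have h1 := hcg ⟨(kF : ℕ) - 1, hplt⟩
        have hv : ((⟨(kF : ℕ) - 1, hplt⟩ : Fin (n - 2)) : ℕ) = (kF : ℕ) - 1 := rfl
        rw [hv, show ((((kF : ℕ) - 1 : ℕ)) : ℤ) = k - 1 by omega] at h1
        rw [h1]
    have S3 : (∑ j : Fin (n - 2), if (kF : ℕ) + 1 = (j : ℕ) then g j * (-I * (1 - q)) else 0)
        = c (k + 1) * (-I * (1 - q)) := by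
      by_cases hk1 : (kF : ℕ) + 1 < n - 2
      · have e3 : (∑ j : Fin (n - 2), if (kF : ℕ) + 1 = (j : ℕ) then g j * (-I * (1 - q)) else 0)
            = ∑ j : Fin (n - 2), if (j : ℕ) = (kF : ℕ) + 1 then g j * (-I * (1 - q)) else 0 := by
          apply Finset.sum_congr rfl
          intro j _
          split_ifs with h1 h2 <;> first | rfl | omega
        rw [e3, key ((kF : ℕ) + 1) hk1]
        have h1 := hcg ⟨(kF : ℕ) + 1, hk1⟩
        have hv : ((⟨(kF : ℕ) + 1, hk1⟩ : Fin (n - 2)) : ℕ) = (kF : ℕ) + 1 := rfl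
        rw [hv, show ((((kF : ℕ) + 1 : ℕ)) : ℤ) = k + 1 by omega] at h1
        rw [h1]
      · rw [Finset.sum_eq_zero (fun j _ => if_neg (by have := j.isLt; omega))]
        rw [hc0 (k + 1) (by right; omega)]
        ring
    rw [S1, S2, S3] at hs
    linear_combination I * hs +
      (c (k + 1) * (1 - q) - c (k - 1) * (1 - q⁻¹) + c k * (q - q⁻¹)) * Complex.I_sq
  -- solving the recurrence
  have claim : ∀ k : ℕ, k ≤ n - 2 → (1 - q) * c k = c 0 * ((q⁻¹) ^ k - q) := by
    intro k
    induction k using Nat.strong_induction_on with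
    | _ k ih =>
      intro hk
      match k with
      | 0 => simp; ring
      | 1 =>
        have h := hrec 0 le_rfl (by omega)
        norm_num at h
        rw [hc0 (-1) (by left; omega)] at h
        push_cast
        linear_combination h
      | (k + 2) =>
        have ih1 := ih k (by omega) (by omega)
        have ih2 := ih (k + 1) (by omega) (by omega)
        have h := hrec (k + 1) (by omega) (by omega)
        rw [show ((k : ℤ) + 1 + 1) = (((k + 2 : ℕ) : ℤ)) by push_cast; ring,
          show ((k : ℤ) + 1 - 1) = ((k : ℕ) : ℤ) by ring,
          show ((k : ℤ) + 1) = (((k + 1 : ℕ) : ℤ)) by push_cast; ring] at h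
        apply mul_left_cancel₀ hq1'
        have hqr : q * q⁻¹ = 1 := mul_inv_cancel₀ hq0
        linear_combination (1 - q) * h + (1 - q⁻¹) * ih1 - (q - q⁻¹) * ih2 -
          c 0 * (q⁻¹) ^ k * (1 - q⁻¹) * hqr
  -- conclude
  have hqpow : (q⁻¹) ^ (n - 2) = q ^ 2 := by
    have h1 : q ^ (n - 2) * q ^ 2 = 1 := by
      rw [← pow_add, show n - 2 + 2 = n by omega, hq]
    rw [inv_pow]
    exact inv_eq_of_mul_eq_one_right h1
  have hend := claim (n - 2) le_rfl
  rw [hc0 ((n - 2 : ℕ) : ℤ) (by right; push_cast; omega), hqpow, mul_zero] at hend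
  have hfac : q ^ 2 - q ≠ 0 := by
    rw [show q ^ 2 - q = -(q * (1 - q)) by ring]
    exact neg_ne_zero.mpr (mul_ne_zero hq0 hq1')
  have hczero : c 0 = 0 := by
    rcases mul_eq_zero.mp hend.symm with h | h
    · exact h
    · exact absurd h hfac
  intro i
  have := claim i (le_of_lt i.isLt)
  rw [hczero, zero_mul] at this
  have hci : c ((i : ℕ) : ℤ) = 0 := by
    rcases mul_eq_zero.mp this with h | h
    · exact absurd h hq1'
    · exact h
  rw [← hcg i, hci]
end

section
/- Let n ≥ 4 be an even integer, let s ∈ ℂ* be such that q = s² satisfies q^n = 1 and q ≠ 1, and set δ = −s − s⁻¹. Let V be a complex vector space with a sesquilinear hermitian form ⟨·,·⟩, and let v_1, …, v_{n−1} ∈ V satisfy: ⟨v_j, v_j⟩ = −δ for all j; ⟨v_j, v_k⟩ = −1 whenever |j − k| = 1; and ⟨v_j, v_k⟩ = 0 whenever |j − k| > 1. Assume moreover that v_{n−1} lies in the linear span of v_1, …, v_{n−2}. Then v_{n−1} = e_1(δ)·v_{n−2} − e_2(δ)·v_{n−3} + … + (−1)^{n−1} e_{n−2}(δ)·v_1,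 i.e. v_{n−1} = Σ_{j=1}^{n−2} (−1)^{j+1} e_j(δ) v_{n−1−j}. -/
open Polynomial
lemma aeval_e_closed (s t : ℂ) (hst : s * t = 1) (l : ℕ) :
    (s - t) * aeval (-s - t) (e l) = (-1)^l * (s^(l+1) - t^(l+1)) := by
  induction l using Nat.twoStepInduction with
  | zero => simp [e]
  | one => show (s - t) * aeval (-s - t) (X : Polynomial ℤ) = _; simp only [aeval_X]; ring
  | more l ih1 ih2 =>
    show (s - t) * aeval (-s - t) (X * e (l+1) - e l) = _
    simp only [map_sub, map_mul, aeval_X]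
    linear_combination (-s - t) * ih2 - ih1 + (-1)^l * (s^(l+1) - t^(l+1)) * hst

lemma pow_key (s t : ℂ) (hst : s * t = 1) (j m : ℕ) (h2 : s ^ (2*(j+m+3)) = 1) :
    (s^(m+2) - t^(m+2)) * (s^(j+m+2) - t^(j+m+2)) = (s - t) * (s^(j+1) - t^(j+1)) := by
  have ht2 : t ^ (2*(j+m+3)) = 1 := by
    have h := congrArg (· ^ (2*(j+m+3))) hst
    simp only [mul_pow, one_pow] at h
    rw [h2, one_mul] at h; exact h
  have e1 : s^(j+2*m+4) = t^(j+2) := by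
    calc s^(j+2*m+4) = s^(j+2*m+4) * (t^(2*(j+m+3))) := by rw [ht2, mul_one]
    _ = (s*t)^(j+2*m+4) * t^(j+2) := by ring
    _ = t^(j+2) := by rw [hst, one_pow, one_mul]
  have e2 : t^(j+2*m+4) = s^(j+2) := by
    calc t^(j+2*m+4) = t^(j+2*m+4) * (s^(2*(j+m+3))) := by rw [h2, mul_one]
    _ = (s*t)^(j+2*m+4) * s^(j+2) := by ring
    _ = s^(j+2) := by rw [hst, one_pow, one_mul]
  have e3 : s^(m+2)*t^(j+m+2) = t^j := by
    calc s^(m+2)*t^(j+m+2) = (s*t)^(m+2) * t^j := by ring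
    _ = t^j := by rw [hst, one_pow, one_mul]
  have e4 : t^(m+2)*s^(j+m+2) = s^j := by
    calc t^(m+2)*s^(j+m+2) = (s*t)^(m+2) * s^j := by ring
    _ = s^j := by rw [hst, one_pow, one_mul]
  have e5 : s * t^(j+1) = t^j := by
    calc s * t^(j+1) = (s*t) * t^j := by ring
    _ = t^j := by rw [hst, one_mul]
  have e6 : t * s^(j+1) = s^j := by
    calc t * s^(j+1) = (s*t) * s^j := by ring
    _ = s^j := by rw [hst, one_mul]
  calc (s^(m+2) - t^(m+2)) * (s^(j+m+2) - t^(j+m+2))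
      = s^(j+2*m+4) - s^(m+2)*t^(j+m+2) - t^(m+2)*s^(j+m+2) + t^(j+2*m+4) := by ring
    _ = t^(j+2) - t^j - s^j + s^(j+2) := by rw [e1, e2, e3, e4]
    _ = s^(j+2) - s*t^(j+1) - t*s^(j+1) + t^(j+2) := by rw [e5, e6]; ring
    _ = (s - t) * (s^(j+1) - t^(j+1)) := by ring

lemma e_mul_e (s t : ℂ) (hst : s * t = 1) (hne : s - t ≠ 0) (j m : ℕ)
    (h2 : s ^ (2*(j+m+3)) = 1) :
    aeval (-s - t) (e (m+1)) * aeval (-s - t) (e (j+m+1)) = aeval (-s - t) (e j) := by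
  have h1 := aeval_e_closed s t hst (m+1)
  have h2' := aeval_e_closed s t hst (j+m+1)
  have h3 := aeval_e_closed s t hst j
  have key := pow_key s t hst j m h2
  have hsign : (-1:ℂ)^(m+1) * (-1)^(j+m+1) = (-1)^j := by
    rw [← pow_add, show m+1+(j+m+1) = j+2*m+2 by ring, pow_add, pow_add, pow_mul]
    norm_num
  apply mul_left_cancel₀ (pow_ne_zero 2 hne)
  calc (s-t)^2 * (aeval (-s - t) (e (m+1)) * aeval (-s - t) (e (j+m+1)))
      = ((s-t) * aeval (-s - t) (e (m+1))) * ((s-t) * aeval (-s - t) (e (j+m+1))) := by ring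
    _ = ((-1)^(m+1) * (s^(m+1+1) - t^(m+1+1))) * ((-1)^(j+m+1) * (s^(j+m+1+1) - t^(j+m+1+1))) := by
        rw [h1, h2']
    _ = ((-1:ℂ)^(m+1) * (-1)^(j+m+1)) * ((s^(m+2) - t^(m+2)) * (s^(j+m+2) - t^(j+m+2))) := by
        ring_nf
    _ = (-1:ℂ)^j * ((s - t) * (s^(j+1) - t^(j+1))) := by rw [hsign, key]
    _ = (s-t) * ((-1)^j * (s^(j+1) - t^(j+1))) := by ring
    _ = (s-t)^2 * aeval (-s - t) (e j) := by rw [← h3]; ring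

theorem last_vector_expansion (n : ℕ) (hn : 4 ≤ n) (hne : Even n)
    (s : ℂ) (hs0 : s ≠ 0) (hq : (s ^ 2) ^ n = 1) (hq1 : s ^ 2 ≠ 1)
    {V : Type*} [AddCommGroup V] [Module ℂ V]
    (B : V →ₗ[ℂ] V →ₛₗ[starRingEnd ℂ] ℂ)
    (hherm : ∀ x y : V, B y x = starRingEnd ℂ (B x y))
    (v : ℕ → V)
    (hdiag : ∀ j, 1 ≤ j → j ≤ n - 1 → B (v j) (v j) = -(-s - s⁻¹))
    (hadj : ∀ j k, 1 ≤ j → j ≤ n - 1 → 1 ≤ k → k ≤ n - 1 →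
      ((j : ℤ) - (k : ℤ)).natAbs = 1 → B (v j) (v k) = -1)
    (hfar : ∀ j k, 1 ≤ j → j ≤ n - 1 → 1 ≤ k → k ≤ n - 1 →
      1 < ((j : ℤ) - (k : ℤ)).natAbs → B (v j) (v k) = 0)
    (hspan : v (n - 1) ∈ Submodule.span ℂ (v '' Set.Icc 1 (n - 2))) :
    v (n - 1) = ∑ j ∈ Finset.Icc 1 (n - 2),
      ((-1 : ℂ) ^ (j + 1) * Polynomial.aeval (-s - s⁻¹) (e j)) • v (n - 1 - j) := by
  have hst : s * s⁻¹ = 1 := mul_inv_cancel₀ hs0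
  have hs2n : s ^ (2 * n) = 1 := by rw [pow_mul]; exact hq
  have hne1 : s - s⁻¹ ≠ 0 := by
    intro h
    apply hq1
    have hss : s = s⁻¹ := sub_eq_zero.mp h
    calc s ^ 2 = s * s := sq s
      _ = s * s⁻¹ := by rw [← hss]
      _ = 1 := hst
  -- nonvanishing of e (n-2) at δ
  have hEn2 : aeval (-s - s⁻¹) (e (n - 2)) ≠ 0 := by
    intro h0
    have hcl := aeval_e_closed s s⁻¹ hst (n - 2)
    rw [h0, mul_zero] at hcl
    have hsub := (mul_eq_zero.mp hcl.symm).resolve_left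
      (pow_ne_zero _ (by norm_num : (-1 : ℂ) ≠ 0))
    have hpw : s ^ (n - 1) = (s⁻¹) ^ (n - 1) := by
      have := sub_eq_zero.mp hsub
      rwa [show n - 2 + 1 = n - 1 by omega] at this
    apply hq1
    have h1 : s ^ (n - 1) * s ^ (n - 1) = 1 := by
      calc s ^ (n - 1) * s ^ (n - 1) = s ^ (n - 1) * (s⁻¹) ^ (n - 1) := by rw [← hpw]
        _ = (s * s⁻¹) ^ (n - 1) := (mul_pow _ _ _).symm
        _ = 1 := by rw [hst, one_pow]
    have h2 : s ^ (2 * n) = s ^ (n - 1) * s ^ (n - 1) * s ^ 2 := by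
      rw [show 2 * n = (n - 1) + ((n - 1) + 2) by omega, pow_add, pow_add]; ring
    rw [hs2n, h1, one_mul] at h2
    exact h2.symm
  -- representation of v (n-1)
  obtain ⟨c, hsupp, htot⟩ := (Finsupp.mem_span_image_iff_linearCombination ℂ).mp hspan
  have hsuppF : c.support ⊆ Finset.Icc 1 (n - 2) := by
    intro i hi
    have h := (Finsupp.mem_supported ℂ c).mp hsupp hi
    simpa [Finset.mem_Icc] using h
  have hrepr : v (n - 1) = ∑ i ∈ Finset.Icc 1 (n - 2), c i • v i := by
    rw [← htot, Finsupp.linearCombination_apply, Finsupp.sum]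
    apply Finset.sum_subset hsuppF
    intro x _ hx
    rw [Finsupp.notMem_support_iff.mp hx, zero_smul]
  have hc0 : c 0 = 0 := by
    apply Finsupp.notMem_support_iff.mp
    intro h
    have := hsuppF h
    simp [Finset.mem_Icc] at this
  have hctop : c (n - 1) = 0 := by
    apply Finsupp.notMem_support_iff.mp
    intro h
    have := hsuppF h
    rw [Finset.mem_Icc] at this
    omega
  -- key equations
  have heq : ∀ k, 1 ≤ k → k ≤ n - 2 →
      -(c (k - 1)) + (-(-s - s⁻¹)) * c k + -(c (k + 1)) = (if k = n - 2 then (-1 : ℂ) else 0) := by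
    intro k hk1 hk2
    have hBk : B (v (n - 1)) (v k) = (if k = n - 2 then (-1 : ℂ) else 0) := by
      by_cases h : k = n - 2
      · rw [if_pos h, h]
        exact hadj (n - 1) (n - 2) (by omega) (by omega) (by omega) (by omega) (by omega)
      · rw [if_neg h]
        exact hfar (n - 1) k (by omega) (by omega) hk1 (by omega) (by omega)
    rw [hrepr, map_sum] at hBk
    rw [LinearMap.sum_apply] at hBk
    simp only [map_smul, LinearMap.smul_apply, smul_eq_mul] at hBk
    have hterm : ∀ i ∈ Finset.Icc 1 (n - 2), c i * B (v i) (v k) =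
        (if i = k - 1 then -(c i) else 0) + (if i = k then (-(-s - s⁻¹)) * c i else 0)
          + (if i = k + 1 then -(c i) else 0) := by
      intro i hi
      rw [Finset.mem_Icc] at hi
      rcases eq_or_ne i (k - 1) with h1 | h1
      · rw [if_pos h1, if_neg (by omega), if_neg (by omega),
          hadj i k (by omega) (by omega) (by omega) (by omega) (by omega)]
        ring
      rcases eq_or_ne i k with h2 | h2
      · rw [if_neg h1, if_pos h2, if_neg (by omega), h2, hdiag k (by omega) (by omega)]
        ring
      rcases eq_or_ne i (k + 1) with h3 | h3
      · rw [if_neg h1, if_neg h2, if_pos h3,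
          hadj i k (by omega) (by omega) (by omega) (by omega) (by omega)]
        ring
      · rw [if_neg h1, if_neg h2, if_neg h3,
          hfar i k (by omega) (by omega) (by omega) (by omega) (by omega)]
        ring
    rw [Finset.sum_congr rfl hterm, Finset.sum_add_distrib, Finset.sum_add_distrib,
      Finset.sum_ite_eq', Finset.sum_ite_eq', Finset.sum_ite_eq'] at hBk
    have hA : (if k - 1 ∈ Finset.Icc 1 (n - 2) then -(c (k - 1)) else 0) = -(c (k - 1)) := by
      by_cases h : k - 1 ∈ Finset.Icc 1 (n - 2)
      · rw [if_pos h]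
      · rw [if_neg h]
        rw [Finset.mem_Icc] at h
        have hk : k = 1 := by omega
        rw [hk]
        norm_num [hc0]
    have hBmem : k ∈ Finset.Icc 1 (n - 2) := Finset.mem_Icc.mpr ⟨hk1, hk2⟩
    have hC : (if k + 1 ∈ Finset.Icc 1 (n - 2) then -(c (k + 1)) else 0) = -(c (k + 1)) := by
      by_cases h : k + 1 ∈ Finset.Icc 1 (n - 2)
      · rw [if_pos h]
      · rw [if_neg h]
        rw [Finset.mem_Icc] at h
        have hk : k + 1 = n - 1 := by omega
        rw [hk, hctop]
        norm_num
    rw [hA, if_pos hBmem, hC] at hBk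
    exact hBk
  -- solve recurrence
  have hgen : ∀ m, m + 1 ≤ n - 2 → c (m + 1) = (-1) ^ m * aeval (-s - s⁻¹) (e m) * c 1 := by
    intro m
    induction m using Nat.strong_induction_on with
    | _ m ih =>
      match m, ih with
      | 0, _ =>
        intro _
        simp [e]
      | 1, _ =>
        intro _
        have h := heq 1 le_rfl (by omega)
        rw [if_neg (by omega), hc0] at h
        have hev : aeval (-s - s⁻¹) (e 1) = -s - s⁻¹ := by
          show aeval (-s - s⁻¹) (X : Polynomial ℤ) = _
          simp
        rw [hev]
        linear_combination -h
      | (m + 2), ih =>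
        intro h
        have hih1 := ih m (by omega) (by omega)
        have hih2 := ih (m + 1) (by omega) (by omega)
        have hk := heq (m + 2) (by omega) (by omega)
        rw [if_neg (by omega)] at hk
        have hev : aeval (-s - s⁻¹) (e (m + 2)) =
            (-s - s⁻¹) * aeval (-s - s⁻¹) (e (m + 1)) - aeval (-s - s⁻¹) (e m) := by
          show aeval (-s - s⁻¹) (X * e (m + 1) - e m) = _
          simp [map_sub, map_mul]
        rw [hev]
        have hred : m + 2 - 1 = m + 1 := rfl
        rw [hred] at hk
        linear_combination -hk - hih1 - (-s - s⁻¹) * hih2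
  -- pin down c 1
  have hc1 : aeval (-s - s⁻¹) (e (n - 2)) * c 1 = -1 := by
    have h := heq (n - 2) (by omega) (by omega)
    rw [if_pos rfl, show n - 2 - 1 = n - 3 by omega, show n - 2 + 1 = n - 1 by omega, hctop] at h
    have h1 := hgen (n - 3) (by omega)
    rw [show n - 3 + 1 = n - 2 by omega] at h1
    have h2 := hgen (n - 4) (by omega)
    rw [show n - 4 + 1 = n - 3 by omega] at h2
    have hsgn3 : (-1 : ℂ) ^ (n - 3) = -1 := by
      apply Odd.neg_one_pow
      rcases hne with ⟨p, hp⟩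
      exact ⟨p - 2, by omega⟩
    have hsgn4 : (-1 : ℂ) ^ (n - 4) = 1 := by
      apply Even.neg_one_pow
      rcases hne with ⟨p, hp⟩
      exact ⟨p - 2, by omega⟩
    rw [h1, h2, hsgn3, hsgn4] at h
    have hev : aeval (-s - s⁻¹) (e (n - 2)) =
        (-s - s⁻¹) * aeval (-s - s⁻¹) (e (n - 3)) - aeval (-s - s⁻¹) (e (n - 4)) := by
      rw [show n - 2 = (n - 4) + 2 by omega, show n - 3 = (n - 4) + 1 by omega]
      show aeval (-s - s⁻¹) (X * e (n - 4 + 1) - e (n - 4)) = _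
      simp [map_sub, map_mul]
    rw [hev]
    linear_combination h
  -- coefficients
  have hEmul : ∀ k, 1 ≤ k → k ≤ n - 2 →
      aeval (-s - s⁻¹) (e (n - 1 - k)) * aeval (-s - s⁻¹) (e (n - 2)) =
        aeval (-s - s⁻¹) (e (k - 1)) := by
    intro k hk1 hk2
    have h := e_mul_e s s⁻¹ hst hne1 (k - 1) (n - 2 - k)
      (by rw [show 2 * ((k - 1) + (n - 2 - k) + 3) = 2 * n by omega]; exact hs2n)
    rwa [show (n - 2 - k) + 1 = n - 1 - k by omega,
      show (k - 1) + (n - 2 - k) + 1 = n - 2 by omega] at h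
  have hcval : ∀ k, 1 ≤ k → k ≤ n - 2 →
      c k = (-1) ^ (n - 1 - k + 1) * aeval (-s - s⁻¹) (e (n - 1 - k)) := by
    intro k hk1 hk2
    have h1 := hgen (k - 1) (by omega)
    rw [show k - 1 + 1 = k by omega] at h1
    have hc1' : c 1 = -(aeval (-s - s⁻¹) (e (n - 2)))⁻¹ := by
      calc c 1 = (aeval (-s - s⁻¹) (e (n - 2)))⁻¹ * (aeval (-s - s⁻¹) (e (n - 2)) * c 1) := by
            rw [← mul_assoc, inv_mul_cancel₀ hEn2, one_mul]
        _ = -(aeval (-s - s⁻¹) (e (n - 2)))⁻¹ := by rw [hc1]; ring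
    rw [h1, hc1', ← hEmul k hk1 hk2]
    rcases Nat.even_or_odd k with hke | hko
    · have hs1 : (-1 : ℂ) ^ (k - 1) = -1 := by
        apply Odd.neg_one_pow
        rcases hke with ⟨p, hp⟩
        exact ⟨p - 1, by omega⟩
      have hs2 : (-1 : ℂ) ^ (n - 1 - k + 1) = 1 := by
        apply Even.neg_one_pow
        rcases hne with ⟨p, hp⟩
        rcases hke with ⟨r, hr⟩
        exact ⟨p - r, by omega⟩
      rw [hs1, hs2]
      have hinv : aeval (-s - s⁻¹) (e (n - 2)) * (aeval (-s - s⁻¹) (e (n - 2)))⁻¹ = 1 :=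
        mul_inv_cancel₀ hEn2
      linear_combination (aeval (-s - s⁻¹) (e (n - 1 - k))) * hinv
    · have hs1 : (-1 : ℂ) ^ (k - 1) = 1 := by
        apply Even.neg_one_pow
        rcases hko with ⟨p, hp⟩
        exact ⟨p, by omega⟩
      have hs2 : (-1 : ℂ) ^ (n - 1 - k + 1) = -1 := by
        apply Odd.neg_one_pow
        rcases hne with ⟨p, hp⟩
        rcases hko with ⟨r, hr⟩
        exact ⟨p - r - 1, by omega⟩
      rw [hs1, hs2]
      have hinv : aeval (-s - s⁻¹) (e (n - 2)) * (aeval (-s - s⁻¹) (e (n - 2)))⁻¹ = 1 :=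
        mul_inv_cancel₀ hEn2
      linear_combination (-(aeval (-s - s⁻¹) (e (n - 1 - k)))) * hinv
  -- final reindexing
  rw [hrepr]
  refine Finset.sum_nbij' (fun i => n - 1 - i) (fun j => n - 1 - j) ?_ ?_ ?_ ?_ ?_
  · intro a ha; simp only [Finset.mem_Icc] at ha ⊢; omega
  · intro a ha; simp only [Finset.mem_Icc] at ha ⊢; omega
  · intro a ha; simp only [Finset.mem_Icc] at ha; show n - 1 - (n - 1 - a) = a; omega
  · intro a ha; simp only [Finset.mem_Icc] at ha; show n - 1 - (n - 1 - a) = a; omega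
  · intro a ha
    simp only [Finset.mem_Icc] at ha
    show c a • v a = _
    rw [show n - 1 - (n - 1 - a) = a by omega, hcval a ha.1 ha.2]
end

section
/- Let n ≥ 4 be an integer, let s ∈ ℂ* be such that q = s² satisfies q^n = 1 and q ≠ 1, and let χ₀ ∈ ℂ*. Let V be a complex vector space, let w_1, …, w_{n−2} ∈ V be nonzero vectors, and let T_1, …, T_{n−2} be linear endomorphisms of V such that for all 1 ≤ j, k ≤ n−2: T_j(w_j) = χ₀·w_j; T_j(w_k) = χ₀·(−q·w_k − s·w_j) whenever |j − k| = 1; and T_j(w_k) = −χ₀·q·w_k whenever |j − k| > 1. Then the vectors w_1, …, w_{n−2} are linearly independent. -/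
theorem kernel_vectors_linearIndependent (n : ℕ) (hn : 4 ≤ n)
    (s q χ₀ : ℂ) (hs : s ^ 2 = q) (hq : q ^ n = 1) (hq1 : q ≠ 1)
    (hχ : χ₀ ≠ 0)
    {V : Type*} [AddCommGroup V] [Module ℂ V]
    (w : Fin (n - 2) → V) (hw : ∀ j, w j ≠ 0)
    (T : Fin (n - 2) → (V →ₗ[ℂ] V))
    (hTdiag : ∀ j, T j (w j) = χ₀ • w j)
    (hTadj : ∀ j k : Fin (n - 2), ((j : ℤ) - (k : ℤ)).natAbs = 1 →
      T j (w k) = χ₀ • ((-q) • w k - s • w j))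
    (hTfar : ∀ j k : Fin (n - 2), 1 < ((j : ℤ) - (k : ℤ)).natAbs →
      T j (w k) = (-(χ₀ * q)) • w k) :
    LinearIndependent ℂ w := by
  subst hs
  -- basic nonvanishing facts
  have hs0 : s ≠ 0 := by
    rintro rfl
    simp only [ne_eq, zero_pow, OfNat.ofNat_ne_zero, not_false_iff] at hq1
    rw [zero_pow (by norm_num : (2:ℕ) ≠ 0)] at hq
    rw [zero_pow (by omega : n ≠ 0)] at hq
    exact zero_ne_one hq
  have hst : s * s⁻¹ = 1 := mul_inv_cancel₀ hs0
  have hd : s - s⁻¹ ≠ 0 := by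
    intro h
    apply hq1
    have h2 : s = s⁻¹ := sub_eq_zero.mp h
    have : s * s = s * s⁻¹ := by rw [← h2]
    rw [hst] at this
    calc s ^ 2 = s * s := sq s
    _ = 1 := this
  have hqn1 : (s^2) ^ (n-1) ≠ 1 := by
    intro h
    apply hq1
    have hn1 : n = (n - 1) + 1 := by omega
    rw [hn1, pow_succ, h, one_mul] at hq
    exact hq
  -- the key matrix of coefficients
  set φ : Fin (n-2) → Fin (n-2) → ℂ := fun j k =>
    if k = j then χ₀ * (1 + s^2)
    else if ((j : ℤ) - (k : ℤ)).natAbs = 1 then -(χ₀ * s) else 0 with hφdef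
  have hkey : ∀ j k : Fin (n-2), T j (w k) = (-(χ₀ * s^2)) • w k + φ j k • w j := by
    intro j k
    by_cases hkj : k = j
    · subst hkj
      rw [hTdiag k]
      simp only [hφdef, if_pos rfl]
      module
    · have hvne : (k : ℕ) ≠ (j : ℕ) := fun h => hkj (Fin.ext h)
      by_cases h1 : ((j : ℤ) - (k : ℤ)).natAbs = 1
      · rw [hTadj j k h1]
        simp only [hφdef, if_neg hkj, if_pos h1]
        module
      · have h2 : 1 < ((j : ℤ) - (k : ℤ)).natAbs := by omega
        rw [hTfar j k h2]
        simp only [hφdef, if_neg hkj, if_neg h1]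
        module
  rw [Fintype.linearIndependent_iff]
  intro g hg j
  -- coefficients sequence
  set c : ℕ → ℂ := fun i =>
    if h : 1 ≤ i ∧ i ≤ n - 2 then g ⟨i - 1, by omega⟩ else 0 with hcdef
  have hcval : ∀ (i:ℕ) (h1 : 1 ≤ i) (h2 : i ≤ n-2), c i = g ⟨i-1, by omega⟩ := by
    intro i h1 h2
    simp only [hcdef]
    rw [dif_pos ⟨h1, h2⟩]
  have hczero : ∀ i:ℕ, ¬(1 ≤ i ∧ i ≤ n-2) → c i = 0 := by
    intro i h
    simp only [hcdef]
    rw [dif_neg h]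
  -- scalar equations
  have hcoef : ∀ j : Fin (n-2), ∑ k, g k * φ j k = 0 := by
    intro j
    have h0 : T j 0 = 0 := map_zero _
    rw [← hg, map_sum] at h0
    simp only [map_smul, hkey j] at h0
    simp only [smul_add, Finset.sum_add_distrib] at h0
    have e1 : ∑ k, g k • ((-(χ₀ * s^2)) • w k) = (-(χ₀ * s^2)) • ∑ k, g k • w k := by
      rw [Finset.smul_sum]
      exact Finset.sum_congr rfl fun k _ => smul_comm _ _ _
    rw [e1, hg, smul_zero, zero_add] at h0
    have e2 : ∑ k, g k • (φ j k • w j) = (∑ k, g k * φ j k) • w j := by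
      rw [Finset.sum_smul]
      exact Finset.sum_congr rfl fun k _ => smul_smul _ _ _
    rw [e2] at h0
    rcases smul_eq_zero.mp h0 with h | h
    · exact h
    · exact absurd h (hw j)
  -- rewrite each coefficient sum via the sequence c
  have hsum : ∀ j : Fin (n-2), ∑ k, g k * φ j k =
      χ₀ * (1 + s^2) * c ((j:ℕ)+1) - χ₀ * s * c ((j:ℕ)+2) - χ₀ * s * c (j:ℕ) := by
    intro j
    have hsplit : ∀ k : Fin (n-2), g k * φ j k =
        χ₀ * (1 + s^2) * (if k = j then g k else 0)
        - χ₀ * s * (if (k:ℕ) = (j:ℕ)+1 then g k else 0)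
        - χ₀ * s * (if (k:ℕ)+1 = (j:ℕ) then g k else 0) := by
      intro k
      simp only [hφdef, Fin.ext_iff]
      split_ifs <;> first | ring1 | (exfalso; omega)
    rw [Finset.sum_congr rfl fun k _ => hsplit k]
    simp only [Finset.sum_sub_distrib, ← Finset.mul_sum]
    have S1 : ∑ k : Fin (n-2), (if k = j then g k else 0) = c ((j:ℕ)+1) := by
      rw [Finset.sum_ite_eq' Finset.univ j g, if_pos (Finset.mem_univ j),
        hcval ((j:ℕ)+1) (by omega) (by omega)]
      exact congrArg g (Fin.ext (by simp))
    have S2 : ∑ k : Fin (n-2), (if (k:ℕ) = (j:ℕ)+1 then g k else 0) = c ((j:ℕ)+2) := by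
      by_cases h : (j:ℕ)+1 < n-2
      · have e : ∀ k : Fin (n-2), ((k:ℕ) = (j:ℕ)+1) = (k = (⟨(j:ℕ)+1, h⟩ : Fin (n-2))) := by
          intro k; simp [Fin.ext_iff]
        simp only [e]
        rw [Finset.sum_ite_eq' Finset.univ _ g, if_pos (Finset.mem_univ _),
          hcval ((j:ℕ)+2) (by omega) (by omega)]
        exact congrArg g (Fin.ext (by simp))
      · rw [Finset.sum_eq_zero, hczero ((j:ℕ)+2) (by omega)]
        intro k _
        rw [if_neg (by omega)]
    have S3 : ∑ k : Fin (n-2), (if (k:ℕ)+1 = (j:ℕ) then g k else 0) = c (j:ℕ) := by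
      by_cases h : 1 ≤ (j:ℕ)
      · have hlt : (j:ℕ) - 1 < n - 2 := by omega
        have e : ∀ k : Fin (n-2), ((k:ℕ)+1 = (j:ℕ)) = (k = (⟨(j:ℕ)-1, hlt⟩ : Fin (n-2))) := by
          intro k; simp only [Fin.ext_iff]; simp only [eq_iff_iff]
          constructor <;> (intro hh; omega)
        simp only [e]
        rw [Finset.sum_ite_eq' Finset.univ _ g, if_pos (Finset.mem_univ _),
          hcval (j:ℕ) h (by omega)]
      · rw [Finset.sum_eq_zero, hczero (j:ℕ) (by omega)]
        intro k _
        rw [if_neg (by omega)]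
    rw [S1, S2, S3]
  -- recurrence for c
  have hrec : ∀ i : ℕ, 1 ≤ i → i ≤ n-2 →
      (1 + s^2) * c i = s * (c (i-1) + c (i+1)) := by
    intro i h1 h2
    have hlt : i - 1 < n - 2 := by omega
    have hc := hcoef ⟨i-1, hlt⟩
    rw [hsum ⟨i-1, hlt⟩] at hc
    have e1 : (i:ℕ) - 1 + 1 = i := by omega
    have e2 : (i:ℕ) - 1 + 2 = i + 1 := by omega
    simp only [] at hc
    rw [e1, e2] at hc
    have : χ₀ * ((1 + s^2) * c i - s * (c (i+1) + c (i-1))) = 0 := by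
      rw [← hc]; ring
    rcases mul_eq_zero.mp this with h | h
    · exact absurd h hχ
    · have := sub_eq_zero.mp h
      rw [this]; ring_nf
  -- boundary values
  have hc0 : c 0 = 0 := hczero 0 (by omega)
  have hcend : c (n-1) = 0 := hczero (n-1) (by omega)
  -- general solution by induction
  have hP : ∀ i, i ≤ n-1 → (s - s⁻¹) * c i = c 1 * (s^i - (s⁻¹)^i) := by
    intro i
    induction i using Nat.strong_induction_on with
    | _ i ih =>
      match i with
      | 0 => intro _; rw [hc0]; simp
      | 1 => intro _; ring
      | (k+2) =>
        intro hk
        have hk1 := ih (k+1) (by omega) (by omega)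
        have hk0 := ih k (by omega) (by omega)
        have hr := hrec (k+1) (by omega) (by omega)
        have e1 : (k+1) - 1 = k := by omega
        rw [e1] at hr
        have key : s * ((s - s⁻¹) * c (k+2)) = s * (c 1 * (s^(k+2) - (s⁻¹)^(k+2))) := by
          linear_combination (-(s - s⁻¹)) * hr + (1 + s^2) * hk1 - s * hk0
            - (c 1 * (s⁻¹)^k * (s - s⁻¹)) * hst
        exact mul_left_cancel₀ hs0 key
  -- conclude c 1 = 0
  have hne : s^(n-1) - (s⁻¹)^(n-1) ≠ 0 := by
    intro h
    apply hqn1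
    have h2 : s^(n-1) = (s⁻¹)^(n-1) := sub_eq_zero.mp h
    have h3 : s^(n-1) * s^(n-1) = 1 := by
      rw (occs := .pos [2]) [h2]
      rw [← mul_pow, hst, one_pow]
    calc (s^2)^(n-1) = s^(n-1) * s^(n-1) := by ring
    _ = 1 := h3
  have hc1 : c 1 = 0 := by
    have := hP (n-1) le_rfl
    rw [hcend, mul_zero] at this
    rcases mul_eq_zero.mp this.symm with h | h
    · exact h
    · exact absurd h hne
  -- conclude all c i = 0, hence g j = 0
  have hgi : g j = c ((j:ℕ)+1) := by
    rw [hcval ((j:ℕ)+1) (by omega) (by omega)]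
    exact congrArg g (Fin.ext (by simp)).symm
  rw [hgi]
  have := hP ((j:ℕ)+1) (by omega)
  rw [hc1, zero_mul] at this
  rcases mul_eq_zero.mp this with h | h
  · exact absurd h hd
  · exact h
end

section
/- Let N ≥ 1 be an integer and let A ∈ ℂ be a primitive 8N-th root of unity. Then (−A)^{N²+2N} · A^{N²} · Σ_{k=0}^{N−1} A^{−4k−2} = 2·(−1)^N · A^{2N²+2N}/(A² − A^{−2}), and this quantity is nonzero. -/
theorem matrix_entry_nonzero (N : ℕ) (hN : 1 ≤ N) (A : ℂ)
    (hA : IsPrimitiveRoot A (8 * N)) :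
    ((-A) ^ (N ^ 2 + 2 * N) * A ^ (N ^ 2) *
        ∑ k ∈ Finset.range N, A ^ (-(4 * (k : ℤ) + 2)) =
      2 * (-1) ^ N * A ^ (2 * N ^ 2 + 2 * N) / (A ^ 2 - A ^ (-2 : ℤ))) ∧
    (-A) ^ (N ^ 2 + 2 * N) * A ^ (N ^ 2) *
        ∑ k ∈ Finset.range N, A ^ (-(4 * (k : ℤ) + 2)) ≠ 0 := by
  have h8N : 8 * N ≠ 0 := by omega
  have hA0 : A ≠ 0 := hA.ne_zero h8N
  have hA2 : A ^ 2 ≠ 0 := pow_ne_zero _ hA0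
  have h4N : A ^ (4 * N) = -1 := by
    have h1 : A ^ (4 * N) * A ^ (4 * N) = 1 := by
      rw [← pow_add]
      rw [show 4 * N + 4 * N = 8 * N by ring]
      exact hA.pow_eq_one
    have h2 : A ^ (4 * N) ≠ 1 := hA.pow_ne_one_of_pos_of_lt (by omega) (by omega)
    rcases mul_self_eq_one_iff.mp h1 with h | h
    · exact absurd h h2
    · exact h
  have h4ne1 : A ^ 4 ≠ 1 := hA.pow_ne_one_of_pos_of_lt (by norm_num) (by omega)
  have hden : A ^ 2 - A ^ (-2 : ℤ) ≠ 0 := by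
    intro h
    rw [sub_eq_zero, zpow_neg, show ((2 : ℤ) = (2 : ℕ)) from rfl, zpow_natCast] at h
    apply h4ne1
    calc A ^ 4 = A ^ 2 * A ^ 2 := by ring
      _ = A ^ 2 * (A ^ 2)⁻¹ := by rw [← h]
      _ = 1 := mul_inv_cancel₀ hA2
  have hBne1 : A⁻¹ ^ 4 ≠ 1 := by
    rw [inv_pow, Ne, inv_eq_one]; exact h4ne1
  have hBden : A⁻¹ ^ 4 - 1 ≠ 0 := sub_ne_zero.mpr hBne1
  have hsum : ∑ k ∈ Finset.range N, A ^ (-(4 * (k : ℤ) + 2)) =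
      2 / (A ^ 2 - A ^ (-2 : ℤ)) := by
    have hterm : ∀ k ∈ Finset.range N,
        A ^ (-(4 * (k : ℤ) + 2)) = A⁻¹ ^ 2 * (A⁻¹ ^ 4) ^ k := by
      intro k _
      rw [show -(4 * (k : ℤ) + 2) = -((4 * k + 2 : ℕ) : ℤ) by push_cast; ring,
        zpow_neg, zpow_natCast, ← inv_pow]
      ring
    rw [Finset.sum_congr rfl hterm, ← Finset.mul_sum, geom_sum_eq hBne1]
    have hBN : (A⁻¹ ^ 4) ^ N = -1 := by
      rw [← pow_mul, inv_pow, h4N]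
      norm_num
    rw [hBN, zpow_neg, show ((2 : ℤ) = (2 : ℕ)) from rfl, zpow_natCast,
      ← mul_div_assoc, div_eq_div_iff hBden (by
        intro h
        apply hden
        rwa [zpow_neg, show ((2 : ℤ) = (2 : ℕ)) from rfl, zpow_natCast])]
    field_simp
    ring
  have hsign : ((-1 : ℂ)) ^ (N ^ 2 + 2 * N) = (-1) ^ N := by
    rw [show N ^ 2 + 2 * N = N * N + 2 * N by ring, pow_add, pow_mul, pow_mul]
    rcases Nat.even_or_odd N with h | h <;> simp [h.neg_one_pow]
  have key : (-A) ^ (N ^ 2 + 2 * N) * A ^ (N ^ 2) *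
      ∑ k ∈ Finset.range N, A ^ (-(4 * (k : ℤ) + 2)) =
      2 * (-1) ^ N * A ^ (2 * N ^ 2 + 2 * N) / (A ^ 2 - A ^ (-2 : ℤ)) := by
    rw [hsum, neg_pow, hsign,
      show 2 * N ^ 2 + 2 * N = (N ^ 2 + 2 * N) + N ^ 2 by ring, pow_add]
    field_simp
    ring
  refine ⟨key, ?_⟩
  rw [key]
  apply div_ne_zero _ hden
  apply mul_ne_zero
  apply mul_ne_zero
  · norm_num
  · exact pow_ne_zero _ (by norm_num)
  · exact pow_ne_zero _ hA0
end
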